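/- Let E be an elliptic curve with ordinary reduction over a complete discretely valued field K of characteristic p ≥ 3. The Mazur–Tate sigma function σ = σ_{E,ω} is the unique power series in βz(1 + z·O[[z]]) satisfying σ(pQ) = σ(Q)^{p²} · f_p(Q) for all Q in the formal group Ê(O), where f_p is the p-th division polynomial with respect to ω. -/

import Mathlib

open PowerSeries

/-- Composition `f ∘ g` of power series (substituting `g`, assumed to have zero constant
term, into `f`). -/
noncomputable def pscomp {R : Type*} [CommRing R] (f g : PowerSeries R) : PowerSeries R :=
  PowerSeries.mk fun n =>
    PowerSeries.coeff (R := R) n (Polynomial.eval₂ (PowerSeries.C (R := R)) g (PowerSeries.trunc (n + 1) f))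

section Aux

variable {R : Type*} [CommRing R]

lemma aux_coeff_mul_eq_zero {a b : PowerSeries R} {A B : ℕ}
    (ha : ∀ i < A, PowerSeries.coeff (R := R) i a = 0)
    (hb : ∀ j < B, PowerSeries.coeff (R := R) j b = 0)
    {k : ℕ} (hk : k < A + B) : PowerSeries.coeff (R := R) k (a * b) = 0 := by
  rw [PowerSeries.coeff_mul]
  apply Finset.sum_eq_zero
  rintro ⟨i, j⟩ hij
  rw [Finset.HasAntidiagonal.mem_antidiagonal] at hij
  rcases lt_or_ge i A with h | h
  · rw [ha i h, zero_mul]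
  · have : j < B := by omega
    rw [hb j this, mul_zero]

lemma aux_coeff_pow_eq_zero {a : PowerSeries R} {A : ℕ}
    (ha : ∀ i < A, PowerSeries.coeff (R := R) i a = 0) (m : ℕ) :
    ∀ k < m * A, PowerSeries.coeff (R := R) k (a ^ m) = 0 := by
  induction m with
  | zero => intro k hk; omega
  | succ m ih =>
      intro k hk
      rw [Nat.succ_mul] at hk
      rw [pow_succ]
      exact aux_coeff_mul_eq_zero ih ha hk

lemma aux_coeff_pow_leading {a : PowerSeries R} {A : ℕ}
    (ha : ∀ i < A, PowerSeries.coeff (R := R) i a = 0) (m : ℕ) :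
    PowerSeries.coeff (R := R) (m * A) (a ^ m) = (PowerSeries.coeff (R := R) A a) ^ m := by
  induction m with
  | zero => simp
  | succ m ih =>
      rw [pow_succ, PowerSeries.coeff_mul]
      rw [Finset.sum_eq_single (m * A, A)]
      · rw [ih, pow_succ]
      · rintro ⟨i, j⟩ hij hne
        rw [Finset.HasAntidiagonal.mem_antidiagonal, Nat.succ_mul] at hij
        rcases lt_or_ge i (m * A) with h | h
        · rw [aux_coeff_pow_eq_zero ha m i h, zero_mul]
        · have hj : j < A := by
            rcases Nat.lt_or_ge j A with h' | h'
            · exact h'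
            · exfalso; apply hne
              have hi : i = m * A := by omega
              have hjj : j = A := by omega
              simp [hi, hjj]
          rw [ha j hj, mul_zero]
      · intro h
        exact absurd (Finset.HasAntidiagonal.mem_antidiagonal.2 (by ring)) h

lemma aux_coeff_pscomp (f g : PowerSeries R) (k : ℕ) :
    PowerSeries.coeff (R := R) k (pscomp f g) =
      ∑ i ∈ Finset.range (k + 1), PowerSeries.coeff (R := R) i f * PowerSeries.coeff (R := R) k (g ^ i) := by
  rw [pscomp, PowerSeries.coeff_mk, PowerSeries.trunc_apply]
  rw [Polynomial.eval₂_finset_sum]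
  rw [map_sum]
  rw [Finset.range_eq_Ico]
  apply Finset.sum_congr rfl
  intro i _
  rw [Polynomial.eval₂_monomial, PowerSeries.coeff_C_mul]

lemma aux_pscomp_sub (f₁ f₂ g : PowerSeries R) :
    pscomp (f₁ - f₂) g = pscomp f₁ g - pscomp f₂ g := by
  ext k
  rw [map_sub, aux_coeff_pscomp, aux_coeff_pscomp, aux_coeff_pscomp, ← Finset.sum_sub_distrib]
  apply Finset.sum_congr rfl
  intro i _
  rw [map_sub, sub_mul]

lemma aux_pscomp_vanish {f g : PowerSeries R} {n P : ℕ}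
    (hf : ∀ i < n, PowerSeries.coeff (R := R) i f = 0)
    (hg : ∀ j < P, PowerSeries.coeff (R := R) j g = 0)
    {k : ℕ} (hk : k < n * P) : PowerSeries.coeff (R := R) k (pscomp f g) = 0 := by
  rw [aux_coeff_pscomp]
  apply Finset.sum_eq_zero
  intro i _
  rcases lt_or_ge i n with h | h
  · rw [hf i h, zero_mul]
  · have : k < i * P := lt_of_lt_of_le hk (Nat.mul_le_mul_right P h)
    rw [aux_coeff_pow_eq_zero hg i k this, mul_zero]

lemma aux_pscomp_leading {f g : PowerSeries R} {n P : ℕ} (hP : 1 ≤ P)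
    (hf : ∀ i < n, PowerSeries.coeff (R := R) i f = 0)
    (hg : ∀ j < P, PowerSeries.coeff (R := R) j g = 0) :
    PowerSeries.coeff (R := R) (n * P) (pscomp f g) =
      PowerSeries.coeff (R := R) n f * (PowerSeries.coeff (R := R) P g) ^ n := by
  rw [aux_coeff_pscomp]
  rw [Finset.sum_eq_single n]
  · rw [aux_coeff_pow_leading hg n]
  · intro i _ hne
    rcases lt_or_ge i n with h | h
    · rw [hf i h, zero_mul]
    · have h' : n < i := lt_of_le_of_ne h (Ne.symm hne)
      have : n * P < i * P := by
        calc n * P < n * P + P := by omega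
        _ ≤ i * P := by nlinarith
      rw [aux_coeff_pow_eq_zero hg i _ this, mul_zero]
  · intro h
    exfalso
    apply h
    rw [Finset.mem_range]
    calc n ≤ n * P := Nat.le_mul_of_pos_right n (by omega)
    _ < n * P + 1 := by omega

end Aux

/-- **Mazur–Tate.** Let `K` be a complete discretely valued field with
valuation ring `O` of characteristic `p ≥ 3`, `E/K` an elliptic curve with ordinary
reduction, `ω` an invariant differential, `z` a formal parameter and `β = (ω/dz)(O)` (a
unit).  The multiplication-by-`p` series `[p](z) = mulp` lies in `O[[z^p]]`, has zero
constant term, and (ordinarity/height one) unit coefficient in degree `p`.  The `p`-th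
division polynomial `f_p` is encoded by `g = z^{p²}·f_p ∈ O[[z]]`.  Then the Mazur–Tate
sigma function is the *unique* power series `σ ∈ βz(1 + z·O[[z]])` (i.e. with
`σ ≡ βz mod z²`) satisfying `σ([p](z)) = σ(z)^{p²}·f_p(z)`, i.e. after clearing
denominators `z^{p²}·σ([p](z)) = σ(z)^{p²}·g`: any two such series are equal. -/
theorem mazur_tate_sigma_unique {p : ℕ} (hp : p.Prime) (hp3 : 3 ≤ p)
    {O : Type*} [CommRing O] [IsDomain O] [CharP O p]
    (β : Oˣ) (mulp g : PowerSeries O)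
    (hmul0 : PowerSeries.constantCoeff (R := O) mulp = 0)
    (hmulform : ∀ j : ℕ, ¬ p ∣ j → PowerSeries.coeff (R := O) j mulp = 0)
    (hord : IsUnit (PowerSeries.coeff (R := O) p mulp))
    (σ₁ σ₂ : PowerSeries O)
    (h₁0 : PowerSeries.constantCoeff (R := O) σ₁ = 0)
    (h₁1 : PowerSeries.coeff (R := O) 1 σ₁ = β)
    (h₁ : PowerSeries.X ^ (p ^ 2) * pscomp σ₁ mulp = σ₁ ^ (p ^ 2) * g)
    (h₂0 : PowerSeries.constantCoeff (R := O) σ₂ = 0)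
    (h₂1 : PowerSeries.coeff (R := O) 1 σ₂ = β)
    (h₂ : PowerSeries.X ^ (p ^ 2) * pscomp σ₂ mulp = σ₂ ^ (p ^ 2) * g) :
    σ₁ = σ₂ := by
  haveI : Fact p.Prime := ⟨hp⟩
  have hp1 : 1 ≤ p := by omega
  -- mulp vanishes below p
  have hm : ∀ j < p, PowerSeries.coeff (R := O) j mulp = 0 := by
    intro j hj
    rcases Nat.eq_zero_or_pos j with rfl | hj0
    · simpa [PowerSeries.coeff_zero_eq_constantCoeff] using hmul0
    · exact hmulform j (fun h => absurd (Nat.le_of_dvd hj0 h) (by omega))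
  -- σ₁ vanishes below 1
  have hσ₁ : ∀ i < 1, PowerSeries.coeff (R := O) i σ₁ = 0 := by
    intro i hi
    interval_cases i
    simpa [PowerSeries.coeff_zero_eq_constantCoeff] using h₁0
  -- g vanishes below p
  have hg : ∀ j < p, PowerSeries.coeff (R := O) j g = 0 := by
    intro j
    induction j using Nat.strong_induction_on with
    | _ j ih =>
      intro hj
      have := congrArg (PowerSeries.coeff (R := O) (j + p ^ 2)) h₁
      rw [PowerSeries.coeff_X_pow_mul] at this
      have hL : PowerSeries.coeff (R := O) j (pscomp σ₁ mulp) = 0 :=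
        aux_pscomp_vanish hσ₁ hm (by omega : j < 1 * p)
      rw [hL] at this
      -- RHS: coefficient of σ₁^{p²} * g at j + p²
      rw [PowerSeries.coeff_mul] at this
      rw [Finset.sum_eq_single (p ^ 2, j)] at this
      · have hlead : PowerSeries.coeff (R := O) (p ^ 2) (σ₁ ^ p ^ 2) = (β : O) ^ p ^ 2 := by
          have := aux_coeff_pow_leading hσ₁ (p ^ 2)
          rw [Nat.mul_one] at this
          rw [this, h₁1]
        rw [hlead] at this
        have hβ : ((β : O) ^ p ^ 2) ≠ 0 := pow_ne_zero _ (Units.ne_zero β)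
        have := this.symm
        exact (mul_eq_zero.mp this).resolve_left hβ
      · rintro ⟨a, b⟩ hab hne
        rw [Finset.HasAntidiagonal.mem_antidiagonal] at hab
        rcases lt_or_ge a (p ^ 2) with h | h
        · rw [aux_coeff_pow_eq_zero hσ₁ (p ^ 2) a (by omega : a < p ^ 2 * 1), zero_mul]
        · have ha : a ≠ p ^ 2 := by
            intro h'; apply hne; subst h'; simp at hab ⊢; omega
          have hb : b < j := by omega
          rw [ih b hb (by omega), mul_zero]
      · intro h
        exact absurd (Finset.HasAntidiagonal.mem_antidiagonal.2 (by ring)) h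
  -- char p for power series
  haveI : CharP (PowerSeries O) p := by
    constructor
    intro n
    rw [← CharP.cast_eq_zero_iff O p n, ← map_natCast (PowerSeries.C (R := O)) n]
    constructor
    · intro h
      have := congrArg (PowerSeries.constantCoeff (R := O)) h
      simpa using this
    · intro h; rw [h, map_zero]
  -- the key equation for δ = σ₁ - σ₂
  by_contra hne
  set δ := σ₁ - σ₂ with hδdef
  have hδne : δ ≠ 0 := sub_ne_zero.mpr hne
  have hE : PowerSeries.X ^ (p ^ 2) * pscomp δ mulp = δ ^ (p ^ 2) * g := by
    rw [hδdef, aux_pscomp_sub, mul_sub, h₁, h₂, ← sub_mul]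
    congr 1
    exact (sub_pow_char_pow (R := PowerSeries O) (p := p) (n := 2) (x := σ₁) (y := σ₂)).symm
  -- least index with nonzero coefficient of δ
  have hex : ∃ n, PowerSeries.coeff (R := O) n δ ≠ 0 := by
    by_contra h
    push_neg at h
    exact hδne (PowerSeries.ext fun n => by rw [h n, map_zero])
  classical
  let n := Nat.find hex
  have hn : PowerSeries.coeff (R := O) n δ ≠ 0 := Nat.find_spec hex
  have hδlt : ∀ i < n, PowerSeries.coeff (R := O) i δ = 0 := fun i hi => by
    by_contra h; exact absurd (Nat.find_le h) (Nat.not_le.mpr hi)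
  have hn2 : 2 ≤ n := by
    by_contra h
    push_neg at h
    interval_cases n
    · apply hn
      show PowerSeries.coeff (R := O) 0 (σ₁ - σ₂) = 0
      rw [map_sub]
      rw [PowerSeries.coeff_zero_eq_constantCoeff, h₁0, h₂0, sub_zero]
    · apply hn
      show PowerSeries.coeff (R := O) 1 (σ₁ - σ₂) = 0
      rw [map_sub, h₁1, h₂1, sub_self]
  -- compare coefficients at n*p + p^2
  have hkey := congrArg (PowerSeries.coeff (R := O) (n * p + p ^ 2)) hE
  rw [PowerSeries.coeff_X_pow_mul] at hkey
  have hL : PowerSeries.coeff (R := O) (n * p) (pscomp δ mulp) =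
      PowerSeries.coeff (R := O) n δ * (PowerSeries.coeff (R := O) p mulp) ^ n :=
    aux_pscomp_leading hp1 hδlt hm
  have hR : PowerSeries.coeff (R := O) (n * p + p ^ 2) (δ ^ p ^ 2 * g) = 0 := by
    apply aux_coeff_mul_eq_zero (A := p ^ 2 * n) (B := p)
    · exact aux_coeff_pow_eq_zero hδlt (p ^ 2)
    · exact hg
    · have hpp : p < p ^ 2 := by nlinarith
      nlinarith
  rw [hL, hR] at hkey
  rcases mul_eq_zero.mp hkey with h | h
  · exact hn h
  · exact (hord.pow n).ne_zero h
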